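/- Let G be a finite abelian group of exponent n, let A ⊆ [1, n-1] be a nonempty set of weights, and let b be a positive integer such that gcd(b,n) < n. Then the bA-weighted Davenport constant of G equals the A-weighted Davenport constant of the subgroup gcd(b,n)·G, i.e., D_{bA}(G) = D_A(gcd(b,n)G). -/
import Mathlib


open Finset

/-- `I` is an index set carrying an `A`-weighted zero sum of `g` (the empty set counts). -/
def IsWZSum {G ι : Type*} [Fintype ι] [AddCommGroup G] (A : Set ℤ) (g : ι → G)
    (I : Finset ι) : Prop :=
  ∃ a : ι → ℤ, (∀ i ∈ I, a i ∈ A) ∧ ∑ i ∈ I, a i • g i = 0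

/-- `N_{A,0}(S)`: the number of subsets of the index set carrying an `A`-weighted zero sum. -/
noncomputable def NZero {G ι : Type*} [Fintype ι] [AddCommGroup G] (A : Set ℤ) (g : ι → G) : ℕ :=
  Set.ncard {I : Finset ι | IsWZSum A g I}

/-- The subsequence of `g` indexed by `J` is `A`-weighted zero-sum free. -/
def IsZSFree {G ι : Type*} [Fintype ι] [AddCommGroup G] (A : Set ℤ) (g : ι → G)
    (J : Finset ι) : Prop :=
  ∀ I ⊆ J, I.Nonempty → ¬ IsWZSum A g I

/-- The `A`-weighted Davenport constant of `G`. -/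
noncomputable def DavenportW (A : Set ℤ) (G : Type*) [AddCommGroup G] : ℕ :=
  sInf {l : ℕ | 0 < l ∧ ∀ g : Fin l → G, ∃ I : Finset (Fin l), I.Nonempty ∧ IsWZSum A g I}

theorem stmt0 (G : Type*) [AddCommGroup G] [Finite G] (n : ℕ)
    (hn : AddMonoid.exponent G = n) (A : Set ℤ) (hA : A.Nonempty)
    (hAsub : A ⊆ Set.Icc 1 ((n : ℤ) - 1)) (b : ℕ) (hb : 0 < b)
    (hbn : Nat.gcd b n < n) :
    DavenportW ((fun a => (b : ℤ) * a) '' A) G =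
      DavenportW A
        (AddMonoidHom.range
          (AddMonoidHom.mk' (fun x : G => (Nat.gcd b n : ℤ) • x)
            (fun x y => smul_add _ x y))) := by
  set d := Nat.gcd b n with hd
  set f : G →+ G := AddMonoidHom.mk' (fun x : G => (d : ℤ) • x) (fun x y => smul_add _ x y)
    with hf
  have hexp : ∀ x : G, (n : ℤ) • x = 0 := by
    intro x
    have := AddMonoid.exponent_nsmul_eq_zero (G := G) x
    rw [hn] at this
    simpa using this
  have hfval : ∀ x : G, f x = (d : ℤ) • x := fun x => rfl
  unfold DavenportW
  congr 1
  ext l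
  simp only [Set.mem_setOf_eq]
  constructor
  · rintro ⟨hl, hP⟩
    refine ⟨hl, fun h => ?_⟩
    choose y hy using fun i => (AddMonoidHom.mem_range (f := f)).1 (h i).2
    set g : Fin l → G := fun i => (Nat.gcdA b n) • y i with hg
    have hbg : ∀ i, (b : ℤ) • g i = ((h i : G)) := by
      intro i
      have hny : (n : ℤ) • y i = 0 := hexp _
      have hbez : ((b : ℤ) * Nat.gcdA b n) = (d : ℤ) - (n : ℤ) * Nat.gcdB b n := by
        have := Nat.gcd_eq_gcd_ab b n
        rw [← hd] at this
        linarith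
      calc (b : ℤ) • g i = ((b : ℤ) * Nat.gcdA b n) • y i := by rw [hg]; exact (mul_smul _ _ _).symm
        _ = ((d : ℤ) - (n : ℤ) * Nat.gcdB b n) • y i := by rw [hbez]
        _ = (d : ℤ) • y i - (Nat.gcdB b n) • ((n : ℤ) • y i) := by
            rw [sub_smul, mul_comm, mul_smul]
        _ = (h i : G) := by rw [hny, smul_zero, sub_zero, ← hfval, hy]
    obtain ⟨I, hIne, a, haA, hsum⟩ := hP g
    have hdecomp : ∀ i ∈ I, ∃ c, c ∈ A ∧ (b : ℤ) * c = a i := by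
      intro i hi
      obtain ⟨c, hc, hbc⟩ := haA i hi
      exact ⟨c, hc, hbc⟩
    classical
    set a' : Fin l → ℤ := fun i =>
      if hi : ∃ c, c ∈ A ∧ (b : ℤ) * c = a i then hi.choose else hA.some with ha'
    have ha'A : ∀ i ∈ I, a' i ∈ A ∧ (b : ℤ) * a' i = a i := by
      intro i hi
      have hex := hdecomp i hi
      simp only [ha', dif_pos hex]
      exact hex.choose_spec
    refine ⟨I, hIne, a', fun i hi => (ha'A i hi).1, ?_⟩
    have : ((∑ i ∈ I, a' i • h i : _) : G) = 0 := by
      push_cast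
      calc ∑ i ∈ I, a' i • ((h i : G)) = ∑ i ∈ I, a i • g i := by
            refine Finset.sum_congr rfl fun i hi => ?_
            rw [← hbg i, smul_smul, ← (ha'A i hi).2, mul_comm]
        _ = 0 := hsum
    exact_mod_cast this
  · rintro ⟨hl, hP⟩
    refine ⟨hl, fun g => ?_⟩
    have hdb : (d : ℤ) * ((b / d : ℕ) : ℤ) = (b : ℤ) := by
      rw [← Nat.cast_mul, Nat.mul_div_cancel' (Nat.gcd_dvd_left b n)]
    set h : Fin l → AddMonoidHom.range f := fun i =>
      ⟨(b : ℤ) • g i, ⟨((b / d : ℕ) : ℤ) • g i, by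
        rw [hfval, ← mul_smul, hdb]⟩⟩ with hh
    obtain ⟨I, hIne, a, haA, hsum⟩ := hP h
    refine ⟨I, hIne, fun i => (b : ℤ) * a i, fun i hi => ⟨a i, haA i hi, rfl⟩, ?_⟩
    have : ((∑ i ∈ I, a i • h i : _) : G) = 0 := by rw [hsum]; rfl
    push_cast at this
    calc ∑ i ∈ I, ((b : ℤ) * a i) • g i = ∑ i ∈ I, a i • ((b : ℤ) • g i) := by
          refine Finset.sum_congr rfl fun i hi => ?_
          rw [← mul_smul, mul_comm]
      _ = 0 := this
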